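/- For a square tiled matrix of size p × p with p > 1, the critical path length of the tiled FlatTree algorithm (with TT kernels) equals 22p − 24. -/

import Mathlib

namespace TiledQR

/-- An elimination `elim(i, piv, k)`: tile `(i, k)` is zeroed out by an orthogonal
transformation combining row `i` with pivot row `piv`. -/
structure Elim where
  i : ℕ
  piv : ℕ
  k : ℕ
deriving DecidableEq

/-- `Before L e f` : the elimination `e` occurs strictly before `f` in the list `L`. -/
def Before (L : List Elim) (e f : Elim) : Prop :=
  ∃ a b : Fin L.length, (a : ℕ) < b ∧ L.get a = e ∧ L.get b = f

/-- `L` is a valid elimination list for a `p × q` tiled matrix: it contains exactly one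
elimination for every sub-diagonal tile `(i, k)` (`1 ≤ k ≤ min p q`, `k < i ≤ p`);
every elimination `elim(i, piv, k)` comes after all eliminations `elim(i, *, k')` and
`elim(piv, *, k')` with `k' < k`, and before the elimination `elim(piv, *, k)` of its
pivot row. -/
def ValidElimList (p q : ℕ) (L : List Elim) : Prop :=
  L.Nodup ∧
  (∀ e ∈ L, 1 ≤ e.k ∧ e.k ≤ min p q ∧ e.k < e.i ∧ e.i ≤ p ∧
      1 ≤ e.piv ∧ e.piv ≤ p ∧ e.piv ≠ e.i) ∧
  (∀ i k, 1 ≤ k → k ≤ min p q → k < i → i ≤ p → ∃! piv, Elim.mk i piv k ∈ L) ∧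
  (∀ a b : Fin L.length, (L.get b).k < (L.get a).k →
      ((L.get b).i = (L.get a).i ∨ (L.get b).i = (L.get a).piv) → (b : ℕ) < a) ∧
  (∀ a b : Fin L.length, (L.get b).k = (L.get a).k →
      (L.get b).i = (L.get a).piv → (a : ℕ) < b)

/-- The tasks of the tiled QR factorization with TT (triangle-on-top-of-triangle)
kernels. -/
inductive Task where
  | GEQRT (r k : ℕ)
  | UNMQR (r k j : ℕ)
  | TTQRT (i piv k : ℕ)
  | TTMQR (i piv k j : ℕ)
deriving DecidableEq

/-- Weights of the TT kernels, the unit being `n_b ^ 3 / 3` flops. -/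
def weight : Task → ℕ
  | .GEQRT _ _ => 4
  | .UNMQR _ _ _ => 6
  | .TTQRT _ _ _ => 2
  | .TTMQR _ _ _ _ => 6

/-- The tasks associated with a `p × q` tiled matrix and an elimination list `L`:
a factorization `GEQRT(r, k)` and updates `UNMQR(r, k, j)` (`k < j ≤ q`) for every tile
`(r, k)` with `k ≤ r ≤ p`, and, for every elimination `elim(i, piv, k)` of `L`, a task
`TTQRT(i, piv, k)` and updates `TTMQR(i, piv, k, j)` for `k < j ≤ q`. -/
def InTasks (p q : ℕ) (L : List Elim) : Task → Prop
  | .GEQRT r k => 1 ≤ k ∧ k ≤ min p q ∧ k ≤ r ∧ r ≤ p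
  | .UNMQR r k j => 1 ≤ k ∧ k ≤ min p q ∧ k ≤ r ∧ r ≤ p ∧ k < j ∧ j ≤ q
  | .TTQRT i piv k => Elim.mk i piv k ∈ L
  | .TTMQR i piv k j => Elim.mk i piv k ∈ L ∧ k < j ∧ j ≤ q

/-- The precedence (dependence) relation between the TT tasks.  Besides the flow
dependencies of the kernels, two tasks reading and writing a common tile
(a pivot tile reused by several eliminations of a column, or a pivot tile that is
subsequently zeroed out) are serialized in the order of the elimination list. -/
inductive Prec (L : List Elim) : Task → Task → Prop
  | geqrt_unmqr (r k j : ℕ) :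
      Prec L (.GEQRT r k) (.UNMQR r k j)
  | geqrt_ttqrt_row (i piv k : ℕ) :
      Prec L (.GEQRT i k) (.TTQRT i piv k)
  | geqrt_ttqrt_piv (i piv k : ℕ) :
      Prec L (.GEQRT piv k) (.TTQRT i piv k)
  | ttqrt_ttmqr (i piv k j : ℕ) :
      Prec L (.TTQRT i piv k) (.TTMQR i piv k j)
  | unmqr_ttmqr_row (i piv k j : ℕ) :
      Prec L (.UNMQR i k j) (.TTMQR i piv k j)
  | unmqr_ttmqr_piv (i piv k j : ℕ) :
      Prec L (.UNMQR piv k j) (.TTMQR i piv k j)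
  | ttmqr_geqrt (a b i k : ℕ) : 2 ≤ k → (a = i ∨ b = i) →
      Prec L (.TTMQR a b (k - 1) k) (.GEQRT i k)
  | ttqrt_serial (i i' piv k : ℕ) :
      Before L (Elim.mk i piv k) (Elim.mk i' piv k) →
      Prec L (.TTQRT i piv k) (.TTQRT i' piv k)
  | ttmqr_serial (i i' piv k j : ℕ) :
      Before L (Elim.mk i piv k) (Elim.mk i' piv k) →
      Prec L (.TTMQR i piv k j) (.TTMQR i' piv k j)
  | ttqrt_pivot_use (a i piv k : ℕ) :
      Prec L (.TTQRT a i k) (.TTQRT i piv k)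
  | ttmqr_pivot_use (a i piv k j : ℕ) :
      Prec L (.TTMQR a i k j) (.TTMQR i piv k j)

/-- A path in the weighted task DAG. -/
def IsPath (p q : ℕ) (L : List Elim) (path : List Task) : Prop :=
  (∀ t ∈ path, InTasks p q L t) ∧ path.Chain' (Prec L)

/-- The critical path length of the tiled algorithm given by the elimination list `L`:
the maximum total weight of a path in the weighted task DAG (equivalently, the makespan
of the earliest-start schedule with unboundedly many processors). -/
noncomputable def cpLength (p q : ℕ) (L : List Elim) : ℕ :=
  sSup { w : ℕ | ∃ path : List Task, IsPath p q L path ∧ w = (path.map weight).sum }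
/-- The FlatTree (Sameh-Kuck) elimination list: all eliminations of column `k` use the
diagonal row `k` as pivot; eliminations are listed column by column and, within a
column, by increasing row index. -/
def flatTreeList (p q : ℕ) : List Elim :=
  (List.range' 1 (min p q)).flatMap fun k =>
    (List.range' (k + 1) (p - k)).map fun i => Elim.mk i k k
/-! ### Auxiliary development -/

/-- Lexicographic order on eliminations by (column, row). -/
def lexR (e f : Elim) : Prop := e.k < f.k ∨ (e.k = f.k ∧ e.i < f.i)

lemma mem_flatTreeList {p q i piv k : ℕ} :
    Elim.mk i piv k ∈ flatTreeList p q ↔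
      piv = k ∧ 1 ≤ k ∧ k ≤ min p q ∧ k < i ∧ i ≤ p := by
  simp only [flatTreeList, List.mem_flatMap, List.mem_map, List.mem_range'_1, Elim.mk.injEq]
  constructor
  · rintro ⟨k', ⟨hk1, hk2⟩, i', ⟨hi1, hi2⟩, rfl, rfl, rfl⟩
    omega
  · rintro ⟨h0, h1, h2, h3, h4⟩
    subst h0
    exact ⟨piv, ⟨h1, by omega⟩, i, ⟨by omega, by omega⟩, rfl, rfl, rfl⟩

lemma pairwise_flatTreeList (p q : ℕ) : (flatTreeList p q).Pairwise lexR := by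
  rw [flatTreeList, List.pairwise_flatMap]
  constructor
  · intro k _
    rw [List.pairwise_map]
    refine (List.pairwise_lt_range').imp ?_
    intro a b hab
    exact Or.inr ⟨rfl, hab⟩
  · refine (List.pairwise_lt_range').imp ?_
    intro k1 k2 h x hx y hy
    simp only [List.mem_map] at hx hy
    obtain ⟨i1, _, rfl⟩ := hx
    obtain ⟨i2, _, rfl⟩ := hy
    exact Or.inl h

lemma before_lexR {p q : ℕ} {e f : Elim} (h : Before (flatTreeList p q) e f) :
    lexR e f := by
  obtain ⟨a, b, hab, ha, hb⟩ := h
  have := List.pairwise_iff_get.1 (pairwise_flatTreeList p q) a b hab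
  rwa [ha, hb] at this

lemma before_of_lexR {p q : ℕ} {e f : Elim} (he : e ∈ flatTreeList p q)
    (hf : f ∈ flatTreeList p q) (h : lexR e f) : Before (flatTreeList p q) e f := by
  obtain ⟨a, ha⟩ := List.mem_iff_get.1 he
  obtain ⟨b, hb⟩ := List.mem_iff_get.1 hf
  rcases lt_trichotomy (a : ℕ) (b : ℕ) with hlt | heq | hgt
  · exact ⟨a, b, hlt, ha, hb⟩
  · exfalso
    have hef : e = f := by rw [← ha, ← hb, Fin.ext heq]
    subst hef
    rcases h with h | ⟨h1, h2⟩ <;> omega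
  · exfalso
    have hr := List.pairwise_iff_get.1 (pairwise_flatTreeList p q) b a hgt
    rw [ha, hb] at hr
    rcases h with h | ⟨h1, h2⟩ <;> rcases hr with hr | ⟨hr1, hr2⟩ <;> omega

lemma before_elim {p q : ℕ} {e f : Elim} (h : Before (flatTreeList p q) e f) :
    e ∈ flatTreeList p q ∧ f ∈ flatTreeList p q := by
  obtain ⟨a, b, _, ha, hb⟩ := h
  exact ⟨ha ▸ (flatTreeList p q).get_mem _, hb ▸ (flatTreeList p q).get_mem _⟩

/-- Earliest completion time of each task in the FlatTree schedule. -/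
def cbound : Task → ℕ
  | .GEQRT r k => if k ≤ 1 then 4 else 22 * k - 24 + 6 * (r - k)
  | .UNMQR r k _ => if k ≤ 1 then 10 else 22 * k - 18 + 6 * (r - k)
  | .TTQRT i _ k => if k ≤ 1 then 2 * i + 2 else 22 * k - 22 + 6 * (i - k)
  | .TTMQR i _ k _ => if k ≤ 1 then 6 * i + 4 else 22 * k - 12 + 6 * (i - k)

lemma weight_le_cbound {p : ℕ} {t : Task}
    (ht : InTasks p p (flatTreeList p p) t) : weight t ≤ cbound t := by
  cases t with
  | GEQRT r k =>
      obtain ⟨h1, h2, h3, h4⟩ := ht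
      simp only [weight, cbound]; split_ifs <;> omega
  | UNMQR r k j =>
      obtain ⟨h1, h2, h3, h4, h5, h6⟩ := ht
      simp only [weight, cbound]; split_ifs <;> omega
  | TTQRT i piv k =>
      obtain ⟨_, h1, h2, h3, h4⟩ := mem_flatTreeList.1 ht
      simp only [weight, cbound]; split_ifs <;> omega
  | TTMQR i piv k j =>
      obtain ⟨_, h1, h2, h3, h4⟩ := mem_flatTreeList.1 ht.1
      simp only [weight, cbound]; split_ifs <;> omega

lemma cbound_le {p : ℕ} (hp : 1 < p) {t : Task}
    (ht : InTasks p p (flatTreeList p p) t) : cbound t ≤ 22 * p - 24 := by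
  cases t with
  | GEQRT r k =>
      obtain ⟨h1, h2, h3, h4⟩ := ht
      simp only [cbound]; split_ifs <;> omega
  | UNMQR r k j =>
      obtain ⟨h1, h2, h3, h4, h5, h6⟩ := ht
      simp only [cbound]; split_ifs <;> omega
  | TTQRT i piv k =>
      obtain ⟨_, h1, h2, h3, h4⟩ := mem_flatTreeList.1 ht
      simp only [cbound]; split_ifs <;> omega
  | TTMQR i piv k j =>
      obtain ⟨hm, h5, h6⟩ := ht
      obtain ⟨_, h1, h2, h3, h4⟩ := mem_flatTreeList.1 hm
      simp only [cbound]; split_ifs <;> omega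

lemma cbound_edge {p : ℕ} {t t' : Task}
    (ht : InTasks p p (flatTreeList p p) t) (ht' : InTasks p p (flatTreeList p p) t')
    (hprec : Prec (flatTreeList p p) t t') : cbound t + weight t' ≤ cbound t' := by
  cases hprec with
  | geqrt_unmqr r k j =>
      obtain ⟨h1, h2, h3, h4⟩ := ht
      simp only [cbound, weight]; split_ifs <;> omega
  | geqrt_ttqrt_row i piv k =>
      obtain ⟨_, h1, h2, h3, h4⟩ := mem_flatTreeList.1 ht'
      simp only [cbound, weight]; split_ifs <;> omega
  | geqrt_ttqrt_piv i piv k =>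
      obtain ⟨hpiv, h1, h2, h3, h4⟩ := mem_flatTreeList.1 ht'
      subst hpiv
      simp only [cbound, weight]; split_ifs <;> omega
  | ttqrt_ttmqr i piv k j =>
      obtain ⟨_, h1, h2, h3, h4⟩ := mem_flatTreeList.1 ht'.1
      simp only [cbound, weight]; split_ifs <;> omega
  | unmqr_ttmqr_row i piv k j =>
      obtain ⟨_, h1, h2, h3, h4⟩ := mem_flatTreeList.1 ht'.1
      simp only [cbound, weight]; split_ifs <;> omega
  | unmqr_ttmqr_piv i piv k j =>
      obtain ⟨hpiv, h1, h2, h3, h4⟩ := mem_flatTreeList.1 ht'.1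
      subst hpiv
      simp only [cbound, weight]; split_ifs <;> omega
  | ttmqr_geqrt a b i k hk hai =>
      obtain ⟨hm, h5, h6⟩ := ht
      obtain ⟨hb, h1, h2, h3, h4⟩ := mem_flatTreeList.1 hm
      obtain ⟨g1, g2, g3, g4⟩ := ht'
      have ha : a = i := by
        rcases hai with h | h
        · exact h
        · omega
      subst ha
      simp only [cbound, weight]; split_ifs <;> omega
  | ttqrt_serial i i' piv k hbef =>
      obtain ⟨he, hf⟩ := before_elim hbef
      obtain ⟨hpiv, h1, h2, h3, h4⟩ := mem_flatTreeList.1 he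
      obtain ⟨_, _, _, h3', h4'⟩ := mem_flatTreeList.1 hf
      have hlex := before_lexR hbef
      have hii : i < i' := by
        rcases hlex with h | ⟨_, h⟩
        · exact absurd (by simpa using h) (lt_irrefl k)
        · simpa using h
      simp only [cbound, weight]; split_ifs <;> omega
  | ttmqr_serial i i' piv k j hbef =>
      obtain ⟨he, hf⟩ := before_elim hbef
      obtain ⟨hpiv, h1, h2, h3, h4⟩ := mem_flatTreeList.1 he
      obtain ⟨_, _, _, h3', h4'⟩ := mem_flatTreeList.1 hf
      have hlex := before_lexR hbef
      have hii : i < i' := by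
        rcases hlex with h | ⟨_, h⟩
        · exact absurd (by simpa using h) (lt_irrefl k)
        · simpa using h
      simp only [cbound, weight]; split_ifs <;> omega
  | ttqrt_pivot_use a i piv k =>
      obtain ⟨hik, _, _, _, _⟩ := mem_flatTreeList.1 ht
      obtain ⟨_, _, _, hki, _⟩ := mem_flatTreeList.1 ht'
      omega
  | ttmqr_pivot_use a i piv k j =>
      obtain ⟨hik, _, _, _, _⟩ := mem_flatTreeList.1 ht.1
      obtain ⟨_, _, _, hki, _⟩ := mem_flatTreeList.1 ht'.1
      omega

lemma chain_aux {p : ℕ} (hp : 1 < p) (path : List Task) :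
    ∀ u : Task, List.Chain' (Prec (flatTreeList p p)) (u :: path) →
      (∀ t ∈ u :: path, InTasks p p (flatTreeList p p) t) →
      cbound u + (path.map weight).sum ≤ 22 * p - 24 := by
  induction path with
  | nil =>
      intro u _ hmem
      simpa using cbound_le hp (hmem u (by simp))
  | cons v rest ih =>
      intro u hchain hmem
      have h1 := List.isChain_cons_cons.1 hchain
      have hu : InTasks p p (flatTreeList p p) u := hmem u (by simp)
      have hv : InTasks p p (flatTreeList p p) v := hmem v (by simp)
      have hedge := cbound_edge hu hv h1.1
      have hrec := ih v h1.2 (fun t htm => hmem t (List.mem_cons_of_mem _ htm))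
      simp only [List.map_cons, List.sum_cons] at *
      omega

lemma path_sum_le {p : ℕ} (hp : 1 < p) (path : List Task)
    (h : IsPath p p (flatTreeList p p) path) :
    (path.map weight).sum ≤ 22 * p - 24 := by
  obtain ⟨hmem, hchain⟩ := h
  cases path with
  | nil => simp
  | cons u rest =>
      have h1 := chain_aux hp rest u hchain hmem
      have hw := weight_le_cbound (hmem u (by simp))
      simp only [List.map_cons, List.sum_cons]
      omega

/-! ### The critical path -/

/-- The tail of the critical path: columns `k, k+1, …, k+n-1`, then `GEQRT(p, k+n)`. -/
def restPath (p : ℕ) : ℕ → ℕ → List Task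
  | k, 0 => [Task.GEQRT p k]
  | k, n + 1 => .GEQRT p k :: .UNMQR p k (k + 1) :: .TTMQR p k k (k + 1) ::
      restPath p (k + 1) n

lemma restPath_sum (p k n : ℕ) :
    ((restPath p k n).map weight).sum = 4 + 16 * n := by
  induction n generalizing k with
  | zero => simp [restPath, weight]
  | succ n ih =>
      simp only [restPath, List.map_cons, List.sum_cons, weight, ih (k + 1)]
      ring

lemma restPath_head (p k n : ℕ) : (restPath p k n).head? = some (.GEQRT p k) := by
  cases n <;> rfl

lemma restPath_chain (p : ℕ) (k n : ℕ) (hk : 1 ≤ k) :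
    List.Chain' (Prec (flatTreeList p p)) (restPath p k n) := by
  induction n generalizing k with
  | zero => exact List.isChain_singleton _
  | succ n ih =>
      have hlink : Prec (flatTreeList p p) (.TTMQR p k k (k + 1)) (.GEQRT p (k + 1)) := by
        have h := Prec.ttmqr_geqrt (L := flatTreeList p p) p k p (k + 1) (by omega)
          (Or.inl rfl)
        simpa using h
      have hhead := restPath_head p (k + 1) n
      rw [restPath]
      refine List.isChain_cons_cons.2 ⟨.geqrt_unmqr _ _ _, List.isChain_cons_cons.2
        ⟨.unmqr_ttmqr_row _ _ _ _, List.isChain_cons.2 ⟨?_, ih (k + 1) (by omega)⟩⟩⟩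
      intro y hy
      rw [hhead] at hy
      simp only [Option.mem_def, Option.some.injEq] at hy
      subst hy
      exact hlink

lemma restPath_mem (p : ℕ) (k n : ℕ) (hk : 1 ≤ k) (hkn : k + n ≤ p) :
    ∀ t ∈ restPath p k n, InTasks p p (flatTreeList p p) t := by
  induction n generalizing k with
  | zero =>
      intro t htm
      simp only [restPath, List.mem_singleton] at htm
      subst htm
      exact ⟨by omega, by omega, by omega, le_refl p⟩
  | succ n ih =>
      intro t htm
      simp only [restPath, List.mem_cons] at htm
      rcases htm with rfl | rfl | rfl | htm
      · exact ⟨by omega, by omega, by omega, le_refl p⟩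
      · exact ⟨by omega, by omega, by omega, le_refl p, by omega, by omega⟩
      · exact ⟨mem_flatTreeList.2 ⟨rfl, by omega, by omega, by omega, le_refl p⟩,
          by omega, by omega⟩
      · exact ih (k + 1) (by omega) (by omega) t htm

/-- A critical path of the FlatTree algorithm. -/
def critPath (p : ℕ) : List Task :=
  .GEQRT 2 1 :: .UNMQR 2 1 2 ::
    (((List.range' 2 (p - 1)).map fun i => .TTMQR i 1 1 2) ++ restPath p 2 (p - 2))

lemma critPath_sum {p : ℕ} (hp : 1 < p) :
    ((critPath p).map weight).sum = 22 * p - 24 := by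
  have hmap : ∀ s n : ℕ,
      ((((List.range' s n).map fun i => Task.TTMQR i 1 1 2)).map weight).sum = 6 * n := by
    intro s n
    induction n generalizing s with
    | zero => simp
    | succ n ih =>
        rw [List.range'_succ]
        simp only [List.map_cons, List.sum_cons, weight, ih (s + 1)]
        ring
  simp only [critPath, List.map_cons, List.sum_cons, List.map_append, List.sum_append,
    hmap, restPath_sum, weight]
  omega

lemma critPath_mem {p : ℕ} (hp : 1 < p) :
    ∀ t ∈ critPath p, InTasks p p (flatTreeList p p) t := by
  intro t htm
  simp only [critPath, List.mem_cons, List.mem_append, List.mem_map,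
    List.mem_range'_1] at htm
  rcases htm with rfl | rfl | ⟨i, ⟨hi1, hi2⟩, rfl⟩ | htm
  · exact ⟨by omega, by omega, by omega, by omega⟩
  · exact ⟨by omega, by omega, by omega, by omega, by omega, by omega⟩
  · exact ⟨mem_flatTreeList.2 ⟨rfl, by omega, by omega, by omega, by omega⟩,
      by omega, by omega⟩
  · exact restPath_mem p 2 (p - 2) (by omega) (by omega) t htm

lemma critPath_chain {p : ℕ} (hp : 1 < p) :
    List.Chain' (Prec (flatTreeList p p)) (critPath p) := by
  have hmem : ∀ i, 2 ≤ i → i ≤ p → Elim.mk i 1 1 ∈ flatTreeList p p := fun i h1 h2 =>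
    mem_flatTreeList.2 ⟨rfl, by omega, by omega, by omega, h2⟩
  have hseg : List.Chain' (Prec (flatTreeList p p))
      ((List.range' 2 (p - 1)).map fun i => Task.TTMQR i 1 1 2) := by
    apply List.Pairwise.isChain
    rw [List.pairwise_map, List.pairwise_iff_get]
    intro a b hab
    have hab' : (a : ℕ) < (b : ℕ) := hab
    have hla : (List.range' 2 (p - 1)).length = p - 1 := by simp
    have hal : (a : ℕ) < p - 1 := by have := a.isLt; omega
    have hbl : (b : ℕ) < p - 1 := by have := b.isLt; omega
    have hga : (List.range' 2 (p - 1)).get a = 2 + (a : ℕ) := by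
      simp [List.getElem_range']
    have hgb : (List.range' 2 (p - 1)).get b = 2 + (b : ℕ) := by
      simp [List.getElem_range']
    rw [hga, hgb]
    apply Prec.ttmqr_serial
    apply before_of_lexR (hmem _ (by omega) (by omega)) (hmem _ (by omega) (by omega))
    exact Or.inr ⟨rfl, by simpa using (by omega : 2 + (a : ℕ) < 2 + (b : ℕ))⟩
  have hmain : List.Chain' (Prec (flatTreeList p p))
      (((List.range' 2 (p - 1)).map fun i => Task.TTMQR i 1 1 2) ++ restPath p 2 (p - 2)) := by
    simp only [List.Chain', List.isChain_append]
    refine ⟨hseg, restPath_chain _ _ _ (by omega), ?_⟩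
    intro x hx y hy
    rw [restPath_head] at hy
    simp only [Option.mem_def, Option.some.injEq] at hy
    subst hy
    obtain ⟨n, rfl⟩ : ∃ n, p = n + 2 := ⟨p - 2, by omega⟩
    have hrw : n + 2 - 1 = n + 1 := by omega
    rw [hrw, List.range'_concat, List.map_append] at hx
    simp only [List.map_cons, List.map_nil, List.getLast?_append, List.getLast?_singleton,
      Option.or_some, Option.some_or, Option.mem_def, Option.some.injEq] at hx
    subst hx
    have h := Prec.ttmqr_geqrt (L := flatTreeList (n + 2) (n + 2)) (2 + 1 * n) 1 (n + 2) 2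
      (by omega) (Or.inl (by omega))
    simpa using h
  rw [critPath]
  refine List.isChain_cons_cons.2 ⟨.geqrt_unmqr _ _ _, List.isChain_cons.2 ⟨?_, hmain⟩⟩
  intro y hy
  have hp1 : p - 1 = (p - 2) + 1 := by omega
  rw [hp1, List.range'_succ, List.map_cons, List.cons_append, List.head?_cons] at hy
  simp only [Option.mem_def, Option.some.injEq] at hy
  subst hy
  exact .unmqr_ttmqr_row _ _ _ _


/-- **Theorem 2 (1), case `p = q > 1`.** The critical path length of the tiled
FlatTree algorithm (with TT kernels) on a square `p × p` matrix with `p > 1` is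
`22p - 24`. -/
theorem flatTree_cpLength_square (p : ℕ) (hp : 1 < p) :
    cpLength p p (flatTreeList p p) = 22 * p - 24 := by
  have hmem : (22 * p - 24) ∈ {w : ℕ | ∃ path : List Task,
      IsPath p p (flatTreeList p p) path ∧ w = (path.map weight).sum} :=
    ⟨critPath p, ⟨critPath_mem hp, critPath_chain hp⟩, (critPath_sum hp).symm⟩
  have hub : ∀ w ∈ {w : ℕ | ∃ path : List Task,
      IsPath p p (flatTreeList p p) path ∧ w = (path.map weight).sum}, w ≤ 22 * p - 24 := by
    rintro w ⟨path, hpath, rfl⟩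
    exact path_sum_le hp path hpath
  exact le_antisymm (csSup_le ⟨_, hmem⟩ hub) (le_csSup ⟨_, fun w hw => hub w hw⟩ hmem)

end TiledQR
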